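/- Let V(x₁, x₂) = x₁² x₂² on ℝ². For every M > 0 and ℓ > 0 there is a constant C_ℓ (depending on M) such that for all x in Ω_M = {x ∈ ℝ² : V(x) < M}, ω_x^ℓ(Ω_M) ≤ C_ℓ / (|x| + 1). Consequently, for every M > 0 and every r > 0, Ω_M is r-polynomially thin: ∫_{x ∈ Ω_M} (ω_x^ℓ(Ω_M))^r d²x < ∞ for all ℓ > 0. -/

import Mathlib

open MeasureTheory
open scoped NNReal ENNReal
noncomputable section

abbrev E2 := EuclideanSpace ℝ (Fin 2)

lemma euclid_equiv_apply (y : E2) (k : Fin 2) :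
    (MeasurableEquiv.toLp 2 (Fin 2 → ℝ)).symm y k = y k := rfl

lemma vol_box (i j : Fin 2) (hij : i ≠ j) (s t : Set ℝ) (hs : MeasurableSet s)
    (ht : MeasurableSet t) :
    volume {y : E2 | y i ∈ s ∧ y j ∈ t} = volume s * volume t := by
  have hmp := EuclideanSpace.volume_preserving_symm_measurableEquiv_toLp (Fin 2)
  set F : Fin 2 → Set ℝ := fun k => if k = i then s else t with hF
  have hset : {y : E2 | y i ∈ s ∧ y j ∈ t}
      = (MeasurableEquiv.toLp 2 (Fin 2 → ℝ)).symm ⁻¹' (Set.univ.pi F) := by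
    ext y
    simp only [Set.mem_setOf_eq, Set.mem_preimage, Set.mem_pi, Set.mem_univ, forall_true_left,
      euclid_equiv_apply]
    constructor
    · rintro ⟨h1, h2⟩ k
      by_cases hk : k = i
      · subst hk; simpa [hF] using h1
      · have hkj : k = j := by omega
        subst hkj; simpa [hF, hk] using h2
    · intro h
      refine ⟨by simpa [hF] using h i, ?_⟩
      have := h j
      simpa [hF, hij.symm] using this
  rw [hset, hmp.measure_preimage ((MeasurableSet.univ_pi (fun k => by
    by_cases hk : k = i <;> simp [hF, hk, hs, ht])).nullMeasurableSet)]
  rw [volume_pi_pi, Fin.prod_univ_two]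
  fin_cases i <;> fin_cases j <;> simp_all [hF, mul_comm]

lemma sq_norm2 (x : E2) : ‖x‖ ^ 2 = (x 0) ^ 2 + (x 1) ^ 2 := by
  rw [EuclideanSpace.norm_eq, Fin.sum_univ_two, Real.sq_sqrt] <;>
    simp [sq_abs] <;> positivity

lemma abs_coord_le_norm (x : E2) (i : Fin 2) : |x i| ≤ ‖x‖ := by
  have h := sq_norm2 x
  have h2 : (x i) ^ 2 ≤ ‖x‖ ^ 2 := by
    fin_cases i
    · show (x 0) ^ 2 ≤ _; nlinarith [sq_nonneg (x 1)]
    · show (x 1) ^ 2 ≤ _; nlinarith [sq_nonneg (x 0)]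
  calc |x i| = Real.sqrt ((x i) ^ 2) := (Real.sqrt_sq_eq_abs _).symm
    _ ≤ Real.sqrt (‖x‖ ^ 2) := Real.sqrt_le_sqrt h2
    _ = ‖x‖ := Real.sqrt_sq (norm_nonneg x)

lemma norm_le_add_coords (x : E2) : ‖x‖ ≤ |x 0| + |x 1| := by
  have h := sq_norm2 x
  nlinarith [sq_abs (x 0), sq_abs (x 1), abs_nonneg (x 0), abs_nonneg (x 1),
    norm_nonneg x, mul_nonneg (abs_nonneg (x 0)) (abs_nonneg (x 1))]

lemma dist_coord (x y : E2) (i : Fin 2) (ℓ : ℝ) (h : y ∈ Metric.closedBall x ℓ) :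
    |y i - x i| ≤ ℓ := by
  have h1 : |(y - x) i| ≤ ‖y - x‖ := abs_coord_le_norm _ i
  have h2 : (y - x) i = y i - x i := rfl
  have h3 : ‖y - x‖ ≤ ℓ := by
    rw [← dist_eq_norm]
    have := Metric.mem_closedBall.mp h
    rwa [dist_comm] at this
  rw [← h2]; exact h1.trans h3

lemma vol_le_box (i j : Fin 2) (hij : i ≠ j) (S : Set E2) (c h w : ℝ)
    (hsub : ∀ y ∈ S, |y i - c| ≤ h ∧ |y j| ≤ w) :
    volume S ≤ ENNReal.ofReal (2 * h) * ENNReal.ofReal (2 * w) := by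
  have hmono : S ⊆ {y : E2 | y i ∈ Set.Icc (c - h) (c + h) ∧ y j ∈ Set.Icc (-w) w} := by
    intro y hy
    obtain ⟨h1, h2⟩ := hsub y hy
    constructor
    · rw [Set.mem_Icc]; constructor <;> [linarith [abs_le.mp h1]; linarith [(abs_le.mp h1).2]]
    · rw [Set.mem_Icc]; exact abs_le.mp h2
  refine (measure_mono hmono).trans ?_
  rw [vol_box i j hij _ _ measurableSet_Icc measurableSet_Icc,
    Real.volume_Icc, Real.volume_Icc]
  apply mul_le_mul' <;> apply ENNReal.ofReal_le_ofReal <;> ring_nf <;> linarith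

lemma sq_symm (y : E2) (i j : Fin 2) (hij : i ≠ j) :
    (y i) ^ 2 * (y j) ^ 2 = (y 0) ^ 2 * (y 1) ^ 2 := by
  fin_cases i <;> fin_cases j <;> simp_all <;> ring

/-- Key estimate: if the dominant coordinate of `x` is large, the set
`Ω_M ∩ B(x,ℓ)` fits in a thin box. -/
lemma omega_box (M ℓ : ℝ) (hM : 0 < M) (hℓ : 0 < ℓ) (x : E2) (i j : Fin 2) (hij : i ≠ j)
    (hbig : ℓ < |x i|) :
    volume ({y : E2 | (y 0) ^ 2 * (y 1) ^ 2 < M} ∩ Metric.closedBall x ℓ)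
      ≤ ENNReal.ofReal (2 * ℓ) * ENNReal.ofReal (2 * (Real.sqrt M / (|x i| - ℓ))) := by
  apply vol_le_box i j hij _ (x i) ℓ _
  rintro y ⟨hy1, hy2⟩
  have hd : |y i - x i| ≤ ℓ := dist_coord x y i ℓ hy2
  refine ⟨hd, ?_⟩
  set d := |x i| - ℓ with hdd
  have hd0 : 0 < d := by linarith
  have hyi : d ≤ |y i| := by
    have := abs_sub_abs_le_abs_sub (x i) (y i)
    rw [abs_sub_comm] at this
    linarith
  have hsq : (y i) ^ 2 * (y j) ^ 2 < M := by
    rw [sq_symm y i j hij]; exact hy1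
  have hsq2 : d ^ 2 * (y j) ^ 2 < M := by
    nlinarith [sq_nonneg (y j), sq_abs (y i), mul_le_mul_of_nonneg_right
      (mul_self_le_mul_self (le_of_lt hd0) hyi) (sq_nonneg (y j))]
  have h1 : (y j) ^ 2 < M / d ^ 2 := by
    rw [lt_div_iff₀ (by positivity)]; linarith [hsq2]
  have h2 : |y j| ≤ Real.sqrt M / d := by
    have : |y j| = Real.sqrt ((y j) ^ 2) := (Real.sqrt_sq_eq_abs _).symm
    rw [this]
    have := Real.sqrt_le_sqrt (le_of_lt h1)
    refine this.trans (le_of_eq ?_)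
    rw [Real.sqrt_div hM.le, Real.sqrt_sq hd0.le]
  exact h2

lemma norm_le_two_coord (x : E2) (i j : Fin 2) (hij : i ≠ j) : ‖x‖ ≤ |x i| + |x j| := by
  have := norm_le_add_coords x
  fin_cases i <;> fin_cases j <;> simp_all <;> linarith

lemma part1 (M ℓ : ℝ) (hM : 0 < M) (hℓ : 0 < ℓ) : ∃ C : ℝ, ∀ x : E2,
    (volume ({y : E2 | (y 0) ^ 2 * (y 1) ^ 2 < M} ∩ Metric.closedBall x ℓ)).toReal
      ≤ C / (‖x‖ + 1) := by
  set B := (volume (Metric.closedBall (0 : E2) ℓ)).toReal with hB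
  have hB0 : 0 ≤ B := ENNReal.toReal_nonneg
  set R : ℝ := 4 * ℓ + 4 with hR
  refine ⟨max (B * (R + 1)) (16 * ℓ * Real.sqrt M), fun x => ?_⟩
  set C := max (B * (R + 1)) (16 * ℓ * Real.sqrt M) with hC
  have hx1 : (0 : ℝ) < ‖x‖ + 1 := by positivity
  have hsM : 0 ≤ Real.sqrt M := Real.sqrt_nonneg M
  by_cases hc : ‖x‖ ≤ R
  · have hfin : volume (Metric.closedBall x ℓ) ≠ ⊤ :=
      (isCompact_closedBall x ℓ).measure_lt_top.ne
    have hle : volume ({y : E2 | (y 0) ^ 2 * (y 1) ^ 2 < M} ∩ Metric.closedBall x ℓ)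
        ≤ volume (Metric.closedBall x ℓ) := measure_mono Set.inter_subset_right
    have htr : (volume ({y : E2 | (y 0) ^ 2 * (y 1) ^ 2 < M} ∩ Metric.closedBall x ℓ)).toReal
        ≤ B := by
      rw [hB, ← Measure.addHaar_closedBall_center volume x ℓ]
      exact ENNReal.toReal_mono hfin hle
    refine htr.trans ?_
    rw [le_div_iff₀ hx1]
    calc B * (‖x‖ + 1) ≤ B * (R + 1) := by nlinarith
      _ ≤ C := le_max_left _ _
  · push_neg at hc
    have key : ∀ i j : Fin 2, i ≠ j → |x j| ≤ |x i| →
        (volume ({y : E2 | (y 0) ^ 2 * (y 1) ^ 2 < M} ∩ Metric.closedBall x ℓ)).toReal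
          ≤ C / (‖x‖ + 1) := by
      intro i j hij hdom
      have hni : ‖x‖ ≤ 2 * |x i| := by
        have := norm_le_two_coord x i j hij; linarith
      have hbig : ℓ < |x i| := by linarith
      set d : ℝ := |x i| - ℓ with hd
      have hd4 : (‖x‖ + 1) / 4 ≤ d := by
        have : ‖x‖ / 2 ≤ |x i| := by linarith
        rw [hd]; linarith
      have hd0 : 0 < d := lt_of_lt_of_le (by linarith) hd4
      have hvol := omega_box M ℓ hM hℓ x i j hij hbig
      rw [← ENNReal.ofReal_mul (by positivity)] at hvol
      have htr := ENNReal.toReal_le_of_le_ofReal (by positivity) hvol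
      refine htr.trans ?_
      have hC2 : 16 * ℓ * Real.sqrt M ≤ C := le_max_right _ _
      rw [show 2 * ℓ * (2 * (Real.sqrt M / d)) = 4 * ℓ * Real.sqrt M / d by ring,
        div_le_div_iff₀ hd0 hx1]
      nlinarith [mul_le_mul_of_nonneg_left hd4 (mul_nonneg (mul_nonneg (by norm_num : (0:ℝ) ≤ 16) hℓ.le) hsM), mul_nonneg (sub_nonneg.mpr hC2) hd0.le]
    rcases le_total (|x 1|) (|x 0|) with h | h
    · exact key 0 1 (by decide) h
    · exact key 1 0 (by decide) h

lemma sq_norm_two (x : E2) (i j : Fin 2) (hij : i ≠ j) : ‖x‖ ^ 2 = (x i) ^ 2 + (x j) ^ 2 := by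
  have := sq_norm2 x
  fin_cases i <;> fin_cases j <;> simp_all <;> linarith

/-- volume of the part of `Ω_M` in the annulus `n ≤ ‖x‖ < n+1`, for large `n`. -/
lemma annulus_bound (M : ℝ) (hM : 0 < M) (n : ℝ) (hn1 : 1 ≤ n)
    (hnw : 2 * Real.sqrt M / n ≤ 1) :
    volume ({y : E2 | (y 0) ^ 2 * (y 1) ^ 2 < M} ∩ {x : E2 | n ≤ ‖x‖ ∧ ‖x‖ < n + 1})
      ≤ ENNReal.ofReal (32 * Real.sqrt M / n) := by
  set w : ℝ := 2 * Real.sqrt M / n with hw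
  have hn0 : (0:ℝ) < n := by linarith
  have hsM : 0 < Real.sqrt M := Real.sqrt_pos.mpr hM
  have hw0 : 0 < w := by rw [hw]; positivity
  set Ω : Set E2 := {y : E2 | (y 0) ^ 2 * (y 1) ^ 2 < M} with hΩ
  set A : Set E2 := {x : E2 | n ≤ ‖x‖ ∧ ‖x‖ < n + 1} with hA
  have piece : ∀ (i j : Fin 2), i ≠ j → ∀ σ : ℝ, σ = 1 ∨ σ = -1 →
      volume {x ∈ Ω ∩ A | |x j| ≤ σ * x i} ≤ ENNReal.ofReal (8 * Real.sqrt M / n) := by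
    intro i j hij σ hσ
    have habs : |σ| = 1 := by rcases hσ with h | h <;> simp [h]
    have hb := vol_le_box i j hij {x ∈ Ω ∩ A | |x j| ≤ σ * x i}
      (σ * (n + (1 - w) / 2)) ((1 + w) / 2) w ?_
    · refine hb.trans ?_
      rw [← ENNReal.ofReal_mul (by positivity)]
      apply ENNReal.ofReal_le_ofReal
      rw [hw]
      have : 2 * ((1 + w) / 2) * (2 * w) = (1 + w) * (2 * w) := by ring
      calc 2 * ((1 + w) / 2) * (2 * w) ≤ 2 * (2 * w) := by nlinarith
        _ = 8 * Real.sqrt M / n := by rw [hw]; ring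
    · rintro y ⟨⟨hyΩ, hyA⟩, hyd⟩
      have hyA1 : n ≤ ‖y‖ := hyA.1
      have hyA2 : ‖y‖ < n + 1 := hyA.2
      have hσy : σ * y i = |y i| := by
        have h1 : 0 ≤ σ * y i := le_trans (abs_nonneg _) hyd
        have h2 : |σ * y i| = |y i| := by rw [abs_mul, habs, one_mul]
        rw [← h2, abs_of_nonneg h1]
      rw [hσy] at hyd
      -- |y i| is big
      have hni : ‖y‖ ≤ 2 * |y i| := by
        have := norm_le_two_coord y i j hij; linarith
      have hyi2 : n / 2 ≤ |y i| := by linarith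
      have hyi0 : 0 < |y i| := by linarith
      -- |y j| ≤ w
      have hsq : (y i) ^ 2 * (y j) ^ 2 < M := by rw [sq_symm y i j hij]; exact hyΩ
      have hyjw : |y j| ≤ w := by
        have hsq2 : (n / 2) ^ 2 * (y j) ^ 2 < M := by
          nlinarith [sq_nonneg (y j), sq_abs (y i),
            mul_le_mul_of_nonneg_right (mul_self_le_mul_self (by linarith) hyi2) (sq_nonneg (y j))]
        have h1 : (y j) ^ 2 < M / (n / 2) ^ 2 := by
          rw [lt_div_iff₀ (by positivity)]; linarith
        have h2 := Real.sqrt_le_sqrt h1.le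
        rw [Real.sqrt_sq_eq_abs, Real.sqrt_div hM.le, Real.sqrt_sq (by positivity)] at h2
        refine h2.trans (le_of_eq ?_)
        rw [hw]; field_simp
      refine ⟨?_, hyjw⟩
      -- |y i| ∈ [n - w, n + 1]
      have hsqn : ‖y‖ ^ 2 = (y i) ^ 2 + (y j) ^ 2 := sq_norm_two y i j hij
      have hlow : n - w ≤ |y i| := by
        nlinarith [sq_abs (y i), sq_abs (y j), abs_nonneg (y i), abs_nonneg (y j)]
      have hhigh : |y i| ≤ n + 1 := (abs_coord_le_norm y i).trans hyA2.le
      have hσσ : σ * σ = 1 := by rcases hσ with h | h <;> rw [h] <;> norm_num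
      have hyiv : y i = σ * |y i| := by rw [← hσy, ← mul_assoc, hσσ, one_mul]
      have habs2 : |y i - σ * (n + (1 - w) / 2)| = |(|y i| - (n + (1 - w) / 2))| := by
        nth_rewrite 1 [hyiv]
        rw [show σ * |y i| - σ * (n + (1 - w) / 2)
          = σ * (|y i| - (n + (1 - w) / 2)) by ring, abs_mul, habs, one_mul]
      rw [habs2, abs_le]
      constructor <;> linarith
  have hcover : Ω ∩ A ⊆ {x ∈ Ω ∩ A | |x 1| ≤ 1 * x 0} ∪ {x ∈ Ω ∩ A | |x 1| ≤ (-1) * x 0}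
      ∪ ({x ∈ Ω ∩ A | |x 0| ≤ 1 * x 1} ∪ {x ∈ Ω ∩ A | |x 0| ≤ (-1) * x 1}) := by
    intro x hx
    rcases le_total (|x 1|) (|x 0|) with h | h
    · rcases le_or_gt 0 (x 0) with h0 | h0
      · left; left; exact ⟨hx, by rw [one_mul]; rwa [abs_of_nonneg h0] at h⟩
      · left; right; exact ⟨hx, by rw [neg_one_mul]; rw [abs_of_neg h0] at h; linarith⟩
    · rcases le_or_gt 0 (x 1) with h0 | h0
      · right; left; exact ⟨hx, by rw [one_mul]; rwa [abs_of_nonneg h0] at h⟩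
      · right; right; exact ⟨hx, by rw [neg_one_mul]; rw [abs_of_neg h0] at h; linarith⟩
  refine (measure_mono hcover).trans ?_
  have h01 : (0:Fin 2) ≠ 1 := by decide
  have h10 : (1:Fin 2) ≠ 0 := by decide
  refine ((measure_union_le _ _).trans ?_)
  have e1 := piece 0 1 h01 1 (Or.inl rfl)
  have e2 := piece 0 1 h01 (-1) (Or.inr rfl)
  have e3 := piece 1 0 h10 1 (Or.inl rfl)
  have e4 := piece 1 0 h10 (-1) (Or.inr rfl)
  calc volume ({x ∈ Ω ∩ A | |x 1| ≤ 1 * x 0} ∪ {x ∈ Ω ∩ A | |x 1| ≤ (-1) * x 0})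
        + volume ({x ∈ Ω ∩ A | |x 0| ≤ 1 * x 1} ∪ {x ∈ Ω ∩ A | |x 0| ≤ (-1) * x 1})
      ≤ (volume {x ∈ Ω ∩ A | |x 1| ≤ 1 * x 0} + volume {x ∈ Ω ∩ A | |x 1| ≤ (-1) * x 0})
        + (volume {x ∈ Ω ∩ A | |x 0| ≤ 1 * x 1} + volume {x ∈ Ω ∩ A | |x 0| ≤ (-1) * x 1}) :=
        add_le_add (measure_union_le _ _) (measure_union_le _ _)
    _ ≤ (ENNReal.ofReal (8 * Real.sqrt M / n) + ENNReal.ofReal (8 * Real.sqrt M / n))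
        + (ENNReal.ofReal (8 * Real.sqrt M / n) + ENNReal.ofReal (8 * Real.sqrt M / n)) :=
        add_le_add (add_le_add e1 e2) (add_le_add e3 e4)
    _ ≤ ENNReal.ofReal (32 * Real.sqrt M / n) := by
        rw [← ENNReal.ofReal_add (by positivity) (by positivity),
          ← ENNReal.ofReal_add (by positivity) (by positivity)]
        apply ENNReal.ofReal_le_ofReal; ring_nf; linarith

lemma omega_small (M ℓ : ℝ) (hM : 0 < M) (hℓ : 0 < ℓ) (x : E2) (n : ℝ) (hn : n ≤ ‖x‖)
    (hbig : 4 * ℓ + 4 ≤ n) :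
    volume ({y : E2 | (y 0) ^ 2 * (y 1) ^ 2 < M} ∩ Metric.closedBall x ℓ)
      ≤ ENNReal.ofReal (16 * ℓ * Real.sqrt M / n) := by
  have hn0 : (0:ℝ) < n := by linarith
  have hsM : 0 ≤ Real.sqrt M := Real.sqrt_nonneg M
  have key : ∀ i j : Fin 2, i ≠ j → |x j| ≤ |x i| →
      volume ({y : E2 | (y 0) ^ 2 * (y 1) ^ 2 < M} ∩ Metric.closedBall x ℓ)
        ≤ ENNReal.ofReal (16 * ℓ * Real.sqrt M / n) := by
    intro i j hij hdom
    have hni : ‖x‖ ≤ 2 * |x i| := by have := norm_le_two_coord x i j hij; linarith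
    have hxi : n / 2 ≤ |x i| := by linarith
    have hbig2 : ℓ < |x i| := by linarith
    have hd4 : n / 4 ≤ |x i| - ℓ := by linarith
    have hd0 : (0:ℝ) < |x i| - ℓ := by linarith
    refine (omega_box M ℓ hM hℓ x i j hij hbig2).trans ?_
    rw [← ENNReal.ofReal_mul (by positivity)]
    apply ENNReal.ofReal_le_ofReal
    rw [show (2:ℝ) * ℓ * (2 * (Real.sqrt M / (|x i| - ℓ)))
      = 4 * ℓ * Real.sqrt M / (|x i| - ℓ) by ring]
    rw [div_le_div_iff₀ hd0 hn0]
    nlinarith [mul_le_mul_of_nonneg_left hd4 (mul_nonneg (mul_nonneg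
      (by norm_num : (0:ℝ) ≤ 16) hℓ.le) hsM)]
  rcases le_total (|x 1|) (|x 0|) with h | h
  · exact key 0 1 (by decide) h
  · exact key 1 0 (by decide) h

lemma part2 (M r ℓ : ℝ) (hM : 0 < M) (hr : 0 < r) (hℓ : 0 < ℓ) :
    ∫⁻ x in {y : E2 | (y 0) ^ 2 * (y 1) ^ 2 < M},
      (volume ({y : E2 | (y 0) ^ 2 * (y 1) ^ 2 < M} ∩ Metric.closedBall x ℓ)) ^ r ∂volume
      < ⊤ := by
  have hsM : 0 < Real.sqrt M := Real.sqrt_pos.mpr hM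
  set Ω : Set E2 := {y : E2 | (y 0) ^ 2 * (y 1) ^ 2 < M} with hΩ
  set ω : E2 → ℝ≥0∞ := fun x => volume (Ω ∩ Metric.closedBall x ℓ) with hω
  set N : ℕ := ⌈4 * (ℓ + Real.sqrt M + 1) + 4⌉₊ + 1 with hN
  have hNr : 4 * (ℓ + Real.sqrt M + 1) + 4 ≤ (N : ℝ) := by
    have := Nat.le_ceil (4 * (ℓ + Real.sqrt M + 1) + 4)
    rw [hN]; push_cast; linarith
  have hN1 : (1:ℝ) ≤ (N : ℝ) := by linarith
  set Bℓ := volume (Metric.closedBall (0 : E2) ℓ) with hBℓ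
  have hBfin : Bℓ ≠ ⊤ := (isCompact_closedBall _ _).measure_lt_top.ne
  set T := Bℓ ^ r * volume (Metric.closedBall (0 : E2) (N : ℝ)) with hT
  have hTfin : T ≠ ⊤ := ENNReal.mul_ne_top
    (ENNReal.rpow_ne_top_of_nonneg hr.le hBfin) (isCompact_closedBall _ _).measure_lt_top.ne
  set c4 : ℝ := (16 * ℓ * Real.sqrt M) ^ r * (32 * Real.sqrt M) with hc4
  have hc40 : 0 ≤ c4 := by
    rw [hc4]; exact mul_nonneg (Real.rpow_nonneg (by positivity) _) (by positivity)
  set D : ℝ := max (T.toReal * (N : ℝ) ^ ((1:ℝ) + r)) (c4 * 2 ^ ((1:ℝ) + r)) with hD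
  have hD0 : (0:ℝ) ≤ D := le_trans (by positivity) (le_max_left _ _)
  set v : ℕ → ℝ := fun n => D / ((n : ℝ) + 1) ^ ((1:ℝ) + r) with hv
  have hv0 : ∀ n, 0 ≤ v n := fun n => div_nonneg hD0 (Real.rpow_nonneg (by positivity) _)
  set A : ℕ → Set E2 := fun n => {x : E2 | (n : ℝ) ≤ ‖x‖ ∧ ‖x‖ < (n : ℝ) + 1} with hA
  have hterm : ∀ n : ℕ, ∫⁻ x in Ω ∩ A n, ω x ^ r ∂volume ≤ ENNReal.ofReal (v n) := by
    intro n
    by_cases hcase : n < N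
    · have hωB : ∀ x ∈ Ω ∩ A n, ω x ^ r ≤ Bℓ ^ r := by
        intro x _
        refine ENNReal.rpow_le_rpow ?_ hr.le
        calc ω x ≤ volume (Metric.closedBall x ℓ) := measure_mono Set.inter_subset_right
          _ = Bℓ := Measure.addHaar_closedBall_center volume x ℓ
      calc ∫⁻ x in Ω ∩ A n, ω x ^ r ∂volume ≤ ∫⁻ _ in Ω ∩ A n, Bℓ ^ r ∂volume :=
            setLIntegral_mono measurable_const hωB
        _ = Bℓ ^ r * volume (Ω ∩ A n) := setLIntegral_const _ _
        _ ≤ Bℓ ^ r * volume (Metric.closedBall (0 : E2) (N : ℝ)) := by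
            gcongr
            intro x hx
            rw [Metric.mem_closedBall, dist_zero_right]
            have h1 : ‖x‖ < (n : ℝ) + 1 := hx.2.2
            have h2 : (n : ℝ) + 1 ≤ (N : ℝ) := by exact_mod_cast Nat.succ_le_of_lt hcase
            linarith
        _ = T := hT.symm
        _ ≤ ENNReal.ofReal (v n) := by
            rw [← ENNReal.ofReal_toReal hTfin]
            apply ENNReal.ofReal_le_ofReal
            have hp : (0:ℝ) < ((n : ℝ) + 1) ^ ((1:ℝ) + r) := Real.rpow_pos_of_pos (by positivity) _
            rw [hv, le_div_iff₀ hp]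
            have h1 : ((n : ℝ) + 1) ^ ((1:ℝ) + r) ≤ (N : ℝ) ^ ((1:ℝ) + r) :=
              Real.rpow_le_rpow (by positivity)
                (by exact_mod_cast Nat.succ_le_of_lt hcase) (by linarith)
            calc T.toReal * ((n : ℝ) + 1) ^ ((1:ℝ) + r)
                ≤ T.toReal * (N : ℝ) ^ ((1:ℝ) + r) :=
                  mul_le_mul_of_nonneg_left h1 ENNReal.toReal_nonneg
              _ ≤ D := le_max_left _ _
    · push_neg at hcase
      have hnN : (N : ℝ) ≤ (n : ℝ) := by exact_mod_cast hcase
      have hn1 : (1:ℝ) ≤ (n : ℝ) := le_trans hN1 hnN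
      have hn0 : (0:ℝ) < (n : ℝ) := by linarith
      have hnw : 2 * Real.sqrt M / (n : ℝ) ≤ 1 := by
        rw [div_le_one hn0]; linarith
      have hbig : 4 * ℓ + 4 ≤ (n : ℝ) := by linarith
      have hωb : ∀ x ∈ Ω ∩ A n, ω x ^ r
          ≤ (ENNReal.ofReal (16 * ℓ * Real.sqrt M / (n : ℝ))) ^ r := by
        intro x hx
        exact ENNReal.rpow_le_rpow (omega_small M ℓ hM hℓ x (n : ℝ) hx.2.1 hbig) hr.le
      calc ∫⁻ x in Ω ∩ A n, ω x ^ r ∂volume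
          ≤ ∫⁻ _ in Ω ∩ A n, (ENNReal.ofReal (16 * ℓ * Real.sqrt M / (n : ℝ))) ^ r ∂volume :=
            setLIntegral_mono measurable_const hωb
        _ = (ENNReal.ofReal (16 * ℓ * Real.sqrt M / (n : ℝ))) ^ r * volume (Ω ∩ A n) :=
            setLIntegral_const _ _
        _ ≤ (ENNReal.ofReal (16 * ℓ * Real.sqrt M / (n : ℝ))) ^ r
            * ENNReal.ofReal (32 * Real.sqrt M / (n : ℝ)) := by
            gcongr
            exact annulus_bound M hM (n : ℝ) hn1 hnw
        _ ≤ ENNReal.ofReal (v n) := by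
            rw [ENNReal.ofReal_rpow_of_pos (by positivity),
              ← ENNReal.ofReal_mul (Real.rpow_nonneg (by positivity) _)]
            apply ENNReal.ofReal_le_ofReal
            have hp1 : (0:ℝ) < ((n : ℝ) + 1) ^ ((1:ℝ) + r) := Real.rpow_pos_of_pos (by positivity) _
            have hp2 : (0:ℝ) < ((n : ℝ)) ^ ((1:ℝ) + r) := Real.rpow_pos_of_pos hn0 _
            have e1 : (16 * ℓ * Real.sqrt M / (n : ℝ)) ^ r
                = (16 * ℓ * Real.sqrt M) ^ r / ((n : ℝ)) ^ r :=
              Real.div_rpow (by positivity) hn0.le _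
            have e2 : ((n : ℝ)) ^ r * (n : ℝ) = ((n : ℝ)) ^ ((1:ℝ) + r) := by
              rw [Real.rpow_add hn0, Real.rpow_one]; ring
            rw [hv, e1, show (16 * ℓ * Real.sqrt M) ^ r / ((n:ℝ)) ^ r * (32 * Real.sqrt M / (n:ℝ))
              = (16 * ℓ * Real.sqrt M) ^ r * (32 * Real.sqrt M) / (((n:ℝ)) ^ r * (n:ℝ)) by ring,
              e2, div_le_div_iff₀ hp2 hp1]
            have e3 : ((n : ℝ) + 1) ^ ((1:ℝ) + r) ≤ (2 * (n : ℝ)) ^ ((1:ℝ) + r) :=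
              Real.rpow_le_rpow (by positivity) (by linarith) (by linarith)
            have e4 : ((2:ℝ) * (n : ℝ)) ^ ((1:ℝ) + r)
                = (2:ℝ) ^ ((1:ℝ) + r) * ((n : ℝ)) ^ ((1:ℝ) + r) :=
              Real.mul_rpow (by norm_num) hn0.le
            calc (16 * ℓ * Real.sqrt M) ^ r * (32 * Real.sqrt M) * ((n : ℝ) + 1) ^ ((1:ℝ) + r)
                ≤ c4 * ((2:ℝ) ^ ((1:ℝ) + r) * ((n : ℝ)) ^ ((1:ℝ) + r)) := by
                  rw [hc4]
                  exact mul_le_mul_of_nonneg_left (e3.trans_eq e4) hc40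
              _ = (c4 * 2 ^ ((1:ℝ) + r)) * ((n : ℝ)) ^ ((1:ℝ) + r) := by ring
              _ ≤ D * ((n : ℝ)) ^ ((1:ℝ) + r) :=
                  mul_le_mul_of_nonneg_right (le_max_right _ _) hp2.le
  have hvsum : Summable v := by
    have h1 : Summable (fun n : ℕ => 1 / (n : ℝ) ^ ((1:ℝ) + r)) :=
      Real.summable_one_div_nat_rpow.mpr (by linarith)
    have h2 : Summable (fun n : ℕ => 1 / ((n : ℝ) + 1) ^ ((1:ℝ) + r)) := by
      refine (h1.comp_injective Nat.succ_injective).congr fun n => ?_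
      simp only [Function.comp_apply]
      push_cast
      ring_nf
    refine (h2.mul_left D).congr fun n => ?_
    rw [hv]
    rw [mul_one_div]
  have hΩcover : Ω ⊆ ⋃ n : ℕ, (Ω ∩ A n) := by
    intro x hx
    refine Set.mem_iUnion.mpr ⟨⌊‖x‖⌋₊, hx, Nat.floor_le (norm_nonneg x), ?_⟩
    exact Nat.lt_floor_add_one _
  calc ∫⁻ x in Ω, ω x ^ r ∂volume
      ≤ ∫⁻ x in ⋃ n : ℕ, (Ω ∩ A n), ω x ^ r ∂volume := lintegral_mono_set hΩcover
    _ ≤ ∑' n : ℕ, ∫⁻ x in Ω ∩ A n, ω x ^ r ∂volume := lintegral_iUnion_le _ _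
    _ ≤ ∑' n : ℕ, ENNReal.ofReal (v n) := ENNReal.tsum_le_tsum hterm
    _ = ENNReal.ofReal (∑' n, v n) := (ENNReal.ofReal_tsum_of_nonneg hv0 hvsum).symm
    _ < ⊤ := ENNReal.ofReal_lt_top


/-- `Ω` is `r`-polynomially thin: `∫_{x ∈ Ω} (ω_x^ℓ(Ω))^r dx < ∞` for all `ℓ > 0`, where
`ω_x^ℓ(Ω) = |Ω ∩ {y : |y - x| ≤ ℓ}|`. -/
def PolynomiallyThin {ν : ℕ} (r : ℝ) (Ω : Set (EuclideanSpace ℝ (Fin ν))) : Prop :=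
  ∀ ℓ : ℝ, 0 < ℓ →
    ∫⁻ x in Ω, (volume (Ω ∩ Metric.closedBall x ℓ)) ^ r ∂volume < ⊤

theorem statement15 (V : EuclideanSpace ℝ (Fin 2) → ℝ)
    (hV : ∀ x, V x = (x 0) ^ 2 * (x 1) ^ 2) :
    (∀ M : ℝ, 0 < M → ∀ ℓ : ℝ, 0 < ℓ → ∃ Cℓ : ℝ,
      ∀ x ∈ {x : EuclideanSpace ℝ (Fin 2) | V x < M},
        (volume ({y | V y < M} ∩ Metric.closedBall x ℓ)).toReal ≤ Cℓ / (‖x‖ + 1)) ∧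
    (∀ M : ℝ, 0 < M → ∀ r : ℝ, 0 < r →
      PolynomiallyThin r {x : EuclideanSpace ℝ (Fin 2) | V x < M}) := by
  constructor
  · intro M hM ℓ hℓ
    obtain ⟨C, hC⟩ := part1 M ℓ hM hℓ
    refine ⟨C, fun x _ => ?_⟩
    have hset : {y : EuclideanSpace ℝ (Fin 2) | V y < M}
        = {y : E2 | (y 0) ^ 2 * (y 1) ^ 2 < M} := by
      ext y; simp [hV]
    rw [hset]
    exact hC x
  · intro M hM r hr ℓ hℓ
    have hset : {y : EuclideanSpace ℝ (Fin 2) | V y < M}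
        = {y : E2 | (y 0) ^ 2 * (y 1) ^ 2 < M} := by
      ext y; simp [hV]
    rw [hset]
    exact part2 M r ℓ hM hr hℓ
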